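/- arXiv:1810.02048 — 4 statements merged into one kernel-verified Lean document; each statement's English description precedes it below -/
import Mathlib

section
/- Let l1, l2 ≥ 4 and k be positive even integers with k < l1 + l2. Let g1 and g2 be holomorphic modular forms of level SL₂(ℤ) and weights l1 and l2 respectively, let t1, t2 be nonnegative integers, set w = l1 + 2t1 + l2 + 2t2 and d = (w − k)/2 (so that d is a positive integer with d > t1 + t2). Then every cusp form f of weight k for SL₂(ℤ) is orthogonal under the Petersson pairing to the weight-k function obtained from the product R_{l1}^{(t1)} g1 · R_{l2}^{(t2)} g2 by applying the lowering operator d times; that is, ∫_𝒟 f(τ) · conj( L^d (R_{l1}^{(t1)} g1 · R_{l2}^{(t2)} g2)(τ) ) · (Im τ)^{k−2} dx dy = 0, where 𝒟 is the standard fundamental domain for SL₂(ℤ) acting on ℍ. -/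
/-- Wirtinger derivative `∂f/∂τ = (1/2)(∂f/∂x − i·∂f/∂y)`. -/
noncomputable def dtau (f : ℂ → ℂ) (z : ℂ) : ℂ :=
  (1/2 : ℂ) * (fderiv ℝ f z 1 - Complex.I * fderiv ℝ f z Complex.I)

/-- Wirtinger derivative `∂f/∂τ̄ = (1/2)(∂f/∂x + i·∂f/∂y)`. -/
noncomputable def dtaubar (f : ℂ → ℂ) (z : ℂ) : ℂ :=
  (1/2 : ℂ) * (fderiv ℝ f z 1 + Complex.I * fderiv ℝ f z Complex.I)

/-- Maass raising operator of weight `k`: `R_k f = 2i·∂f/∂τ + k·f/Im τ`. -/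
noncomputable def raise (k : ℤ) (f : ℂ → ℂ) : ℂ → ℂ :=
  fun z => 2 * Complex.I * dtau f z + (k : ℂ) * f z / (z.im : ℂ)

/-- Maass lowering operator: `L f = −2i·(Im τ)²·∂f/∂τ̄`. -/
noncomputable def lower (f : ℂ → ℂ) : ℂ → ℂ :=
  fun z => -2 * Complex.I * (z.im : ℂ) ^ 2 * dtaubar f z

/-- Iterated raising operator `R_k^(t) = R_{k+2(t−1)} ∘ ⋯ ∘ R_{k+2} ∘ R_k`. -/
noncomputable def raiseIter (k : ℤ) : ℕ → (ℂ → ℂ) → (ℂ → ℂ)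
  | 0 => fun f => f
  | t + 1 => fun f => raise (k + 2 * t) (raiseIter k t f)

/-- The weight-`k` slash action of a real 2×2 matrix of positive determinant:
`(f ∣[k] γ)(τ) = (det γ)^(k/2) · (cτ+d)^(−k) · f((aτ+b)/(cτ+d))`. -/
noncomputable def slash (k : ℤ) (γ : Matrix (Fin 2) (Fin 2) ℝ) (f : ℂ → ℂ) : ℂ → ℂ :=
  fun z => ((γ.det ^ ((k : ℝ) / 2) : ℝ) : ℂ) * ((γ 1 0 : ℂ) * z + (γ 1 1 : ℂ)) ^ (-k) *
    f (((γ 0 0 : ℂ) * z + (γ 0 1 : ℂ)) / ((γ 1 0 : ℂ) * z + (γ 1 1 : ℂ)))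


/-- The standard fundamental domain for the action of `SL₂(ℤ)` on ℍ. -/
def fundamentalDomain : Set ℂ :=
  {z : ℂ | 0 < z.im ∧ 1 ≤ ‖z‖ ∧ |z.re| ≤ 1/2}

namespace NHAux

open Complex Finset

def U : Set ℂ := {z : ℂ | 0 < z.im}

lemma isOpen_U : IsOpen U := isOpen_lt continuous_const Complex.continuous_im

lemma Yne {z : ℂ} (hz : z ∈ U) : ((z.im : ℝ) : ℂ) ≠ 0 := by
  simp only [ne_eq, Complex.ofReal_eq_zero]
  exact ne_of_gt hz

/-- Nearly holomorphic on `U` of depth `< p`. -/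
def NH (p : ℕ) (f : ℂ → ℂ) : Prop :=
  ∃ c : ℕ → ℂ → ℂ, (∀ r, DifferentiableOn ℂ (c r) U) ∧ (∀ r, p ≤ r → c r = 0) ∧
    ∀ z ∈ U, f z = ∑ r ∈ Finset.range p, c r z * ((z.im : ℂ))⁻¹ ^ r

lemma term_hasFDerivAt {c : ℂ → ℂ} {c' z : ℂ} (hz : z.im ≠ 0)
    (hc : HasDerivAt c c' z) (r : ℕ) :
    ∃ L : ℂ →L[ℝ] ℂ, HasFDerivAt (fun w => c w * ((w.im : ℂ))⁻¹ ^ r) L z ∧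
      L 1 = c' * ((z.im : ℂ))⁻¹ ^ r ∧
      L Complex.I = c' * ((z.im : ℂ))⁻¹ ^ r * Complex.I
        + c z * (-(r : ℂ)) * ((z.im : ℂ))⁻¹ ^ (r + 1) := by
  have hY : HasFDerivAt (fun w : ℂ => ((w.im : ℝ) : ℂ))
      (Complex.ofRealCLM.comp Complex.imCLM) z :=
    (Complex.ofRealCLM.comp Complex.imCLM).hasFDerivAt
  have hYne : ((z.im : ℝ) : ℂ) ≠ 0 := by simpa using hz
  have hφ0 := hasDerivAt_zpow (-(r : ℤ)) ((z.im : ℂ)) (Or.inl hYne)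
  have hfun : (fun u : ℂ => u ^ (-(r : ℤ))) = fun u => (u⁻¹) ^ r := by
    funext u; rw [zpow_neg, zpow_natCast, inv_pow]
  have hval : (((-(r : ℤ)) : ℤ) : ℂ) * ((z.im : ℂ)) ^ (-(r : ℤ) - 1)
      = (-(r : ℂ)) * ((z.im : ℂ))⁻¹ ^ (r + 1) := by
    rw [show (-(r : ℤ) - 1 : ℤ) = -((r + 1 : ℕ) : ℤ) by push_cast; ring,
      zpow_neg, zpow_natCast, inv_pow]
    push_cast; ring
  rw [hfun, hval] at hφ0
  have hpow : HasFDerivAt (fun w : ℂ => ((w.im : ℂ))⁻¹ ^ r)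
      (-((((r : ℂ)) * ((z.im : ℂ))⁻¹ ^ (r + 1)) • (Complex.ofRealCLM.comp Complex.imCLM))) z := by
    have := hφ0.comp_hasFDerivAt z hY
    simpa [Function.comp_def, neg_smul] using this
  have hcf : HasFDerivAt c ((ContinuousLinearMap.smulRight (1 : ℂ →L[ℂ] ℂ) c').restrictScalars ℝ) z :=
    hc.hasFDerivAt.restrictScalars ℝ
  refine ⟨_, hcf.mul' hpow, ?_, ?_⟩ <;>
    simp [ContinuousLinearMap.add_apply, ContinuousLinearMap.smul_apply,
      ContinuousLinearMap.smulRight_apply, ContinuousLinearMap.coe_restrictScalars',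
      ContinuousLinearMap.comp_apply, Complex.ofRealCLM_apply, Complex.imCLM_apply,
      Complex.I_im, Complex.one_im, smul_eq_mul] <;> ring

lemma NH_wirtinger {p : ℕ} {c : ℕ → ℂ → ℂ} (hc : ∀ r, DifferentiableOn ℂ (c r) U)
    {f : ℂ → ℂ} (heq : ∀ z ∈ U, f z = ∑ r ∈ Finset.range p, c r z * ((z.im : ℂ))⁻¹ ^ r)
    {z : ℂ} (hz : z ∈ U) :
    dtau f z = ∑ r ∈ Finset.range p, (deriv (c r) z * ((z.im : ℂ))⁻¹ ^ r
        + Complex.I * r / 2 * c r z * ((z.im : ℂ))⁻¹ ^ (r + 1)) ∧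
    dtaubar f z = ∑ r ∈ Finset.range p,
        (-(Complex.I * r / 2) * c r z * ((z.im : ℂ))⁻¹ ^ (r + 1)) := by
  have hz' : z.im ≠ 0 := ne_of_gt hz
  have hder : ∀ r : ℕ, HasDerivAt (c r) (deriv (c r) z) z := fun r =>
    (((hc r).differentiableAt (isOpen_U.mem_nhds hz))).hasDerivAt
  choose L hL h1 hI using fun r => term_hasFDerivAt hz' (hder r) r
  have hsum : HasFDerivAt (fun w => ∑ r ∈ Finset.range p, c r w * ((w.im : ℂ))⁻¹ ^ r)
      (∑ r ∈ Finset.range p, L r) z := HasFDerivAt.fun_sum (fun r _ => hL r)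
  have hF : HasFDerivAt f (∑ r ∈ Finset.range p, L r) z := by
    refine hsum.congr_of_eventuallyEq ?_
    filter_upwards [isOpen_U.mem_nhds hz] with w hw using heq w hw
  have happ : ∀ v : ℂ, (fderiv ℝ f z) v = ∑ r ∈ Finset.range p, L r v := by
    intro v; rw [hF.fderiv]; simp
  constructor
  · rw [dtau, happ 1, happ Complex.I]
    simp only [Finset.mul_sum, ← Finset.sum_sub_distrib]
    refine Finset.sum_congr rfl fun r _ => ?_
    rw [h1 r, hI r]
    have h2 : Complex.I * Complex.I = -1 := Complex.I_mul_I
    field_simp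
    ring_nf
    rw [Complex.I_sq]
    ring
  · rw [dtaubar, happ 1, happ Complex.I]
    simp only [Finset.mul_sum, ← Finset.sum_add_distrib]
    refine Finset.sum_congr rfl fun r _ => ?_
    rw [h1 r, hI r]
    field_simp
    ring_nf
    rw [Complex.I_sq]
    ring

lemma deriv_diffOn {c : ℂ → ℂ} (hc : DifferentiableOn ℂ c U) :
    DifferentiableOn ℂ (deriv c) U :=
  ((hc.analyticOnNhd isOpen_U).deriv).differentiableOn

lemma NH_raise {p : ℕ} {f : ℂ → ℂ} (hf : NH p f) (k : ℤ) : NH (p + 1) (raise k f) := by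
  obtain ⟨c, hc, hv, heq⟩ := hf
  refine ⟨fun m z => 2 * Complex.I * deriv (c m) z +
      (if m = 0 then 0 else ((k : ℂ) - (m - 1 : ℕ)) * c (m - 1) z), ?_, ?_, ?_⟩
  · intro m
    rcases m with _ | s
    · simpa using ((deriv_diffOn (hc 0)).const_mul _).add (differentiableOn_const 0)
    · simp only [Nat.succ_ne_zero, if_false, Nat.add_sub_cancel]
      exact ((deriv_diffOn (hc (s+1))).const_mul _).add ((hc s).const_mul _)
  · intro m hm
    rcases m with _ | s
    · omega
    · have h1 : c (s + 1) = 0 := hv _ (by omega)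
      have h2 : c s = 0 := hv _ (by omega)
      funext z
      simp [h1, h2, Nat.add_sub_cancel, show (0 : ℂ → ℂ) = fun _ : ℂ => (0 : ℂ) from rfl]
  · intro z hz
    have hW := (NH_wirtinger hc heq hz).1
    have hYne : ((z.im : ℝ) : ℂ) ≠ 0 := Yne hz
    have hfz := heq z hz
    -- LHS
    have hL : raise k f z = ∑ r ∈ Finset.range p,
        (2 * Complex.I * deriv (c r) z * ((z.im : ℂ))⁻¹ ^ r
          + ((k : ℂ) - r) * c r z * ((z.im : ℂ))⁻¹ ^ (r + 1)) := by
      rw [raise, hW, hfz]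
      simp only [Finset.mul_sum, Finset.sum_div, ← Finset.sum_add_distrib]
      refine Finset.sum_congr rfl fun r _ => ?_
      have hdiv : ((k : ℂ) * (c r z * ((z.im : ℂ))⁻¹ ^ r)) / ((z.im : ℂ))
          = (k : ℂ) * c r z * ((z.im : ℂ))⁻¹ ^ (r + 1) := by
        rw [div_eq_mul_inv, pow_succ]; ring
      rw [hdiv]
      linear_combination ((r : ℂ) * c r z * ((z.im : ℂ))⁻¹ ^ (r + 1)) * Complex.I_sq
    rw [hL]
    have hderiv_p : deriv (c p) z = 0 := by
      rw [hv p le_rfl]; simp [show (0 : ℂ → ℂ) = fun _ : ℂ => (0 : ℂ) from rfl]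
    simp only [add_mul, Finset.sum_add_distrib]
    congr 1
    · rw [Finset.sum_range_succ, hderiv_p]
      simp
    · rw [Finset.sum_range_succ'
        (fun m => (if m = 0 then 0 else ((k : ℂ) - (m - 1 : ℕ)) * c (m - 1) z)
          * ((z.im : ℂ))⁻¹ ^ m) p]
      simp only [Nat.succ_ne_zero, if_false, Nat.add_sub_cancel, if_true, pow_zero, reduceIte]
      simp

lemma NH_lower_succ {p : ℕ} {f : ℂ → ℂ} (hf : NH (p + 1) f) : NH p (lower f) := by
  obtain ⟨c, hc, hv, heq⟩ := hf
  refine ⟨fun s z => -((s : ℂ) + 1) * c (s + 1) z, fun s => (hc (s+1)).const_mul _,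
    fun s hs => by funext z; simp [hv (s+1) (by omega)], ?_⟩
  intro z hz
  have hW := (NH_wirtinger hc heq hz).2
  have hYne : ((z.im : ℝ) : ℂ) ≠ 0 := Yne hz
  have hL : lower f z = ∑ r ∈ Finset.range (p + 1),
      (-(r : ℂ)) * c r z * ((z.im : ℂ)) ^ 2 * ((z.im : ℂ))⁻¹ ^ (r + 1) := by
    rw [lower, hW, Finset.mul_sum]
    refine Finset.sum_congr rfl fun r _ => ?_
    linear_combination ((r : ℂ) * c r z * ((z.im : ℂ)) ^ 2 * ((z.im : ℂ))⁻¹ ^ (r + 1))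
      * Complex.I_sq
  rw [hL, Finset.sum_range_succ'
      (fun r => (-(r : ℂ)) * c r z * ((z.im : ℂ)) ^ 2 * ((z.im : ℂ))⁻¹ ^ (r + 1)) p]
  simp only [Nat.cast_zero, neg_zero, zero_mul, add_zero]
  refine Finset.sum_congr rfl fun s _ => ?_
  have hpow : ((z.im : ℂ)) ^ 2 * ((z.im : ℂ))⁻¹ ^ (s + 1 + 1) = ((z.im : ℂ))⁻¹ ^ s := by
    rw [show s + 1 + 1 = s + 2 by ring, pow_add, ← mul_assoc]
    rw [show ((z.im : ℂ)) ^ 2 * ((z.im : ℂ))⁻¹ ^ s * ((z.im : ℂ))⁻¹ ^ 2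
        = (((z.im : ℂ)) * ((z.im : ℂ))⁻¹) ^ 2 * ((z.im : ℂ))⁻¹ ^ s by ring,
      mul_inv_cancel₀ hYne]
    ring
  push_cast
  calc -((s : ℂ) + 1) * c (s + 1) z * ((z.im : ℂ)) ^ 2 * ((z.im : ℂ))⁻¹ ^ (s + 1 + 1)
      = -((s : ℂ) + 1) * c (s + 1) z *
        (((z.im : ℂ)) ^ 2 * ((z.im : ℂ))⁻¹ ^ (s + 1 + 1)) := by ring
    _ = -((s : ℂ) + 1) * c (s + 1) z * ((z.im : ℂ))⁻¹ ^ s := by rw [hpow]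

lemma NH_lower {p : ℕ} {f : ℂ → ℂ} (hf : NH p f) : NH (p - 1) (lower f) := by
  rcases p with _ | q
  · -- f vanishes on U, so does lower f
    obtain ⟨c, hc, hv, heq⟩ := hf
    refine ⟨fun _ _ => 0, fun _ => differentiableOn_const 0, fun _ _ => rfl, ?_⟩
    intro z hz
    have hW := (NH_wirtinger hc heq hz).2
    simp only [Finset.range_zero, Finset.sum_empty] at hW ⊢
    rw [lower, hW]; ring
  · exact NH_lower_succ hf

lemma NH_lower_iter {p : ℕ} {f : ℂ → ℂ} (hf : NH p f) (m : ℕ) :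
    NH (p - m) (lower^[m] f) := by
  induction m with
  | zero => simpa using hf
  | succ n ih =>
      rw [Function.iterate_succ_apply']
      have := NH_lower ih
      rwa [show p - n - 1 = p - (n + 1) by omega] at this

lemma NH_zero_eq {f : ℂ → ℂ} (hf : NH 0 f) : ∀ z ∈ U, f z = 0 := by
  obtain ⟨c, hc, hv, heq⟩ := hf
  intro z hz
  simpa using heq z hz

lemma NH_of_holomorphic {g : ℂ → ℂ} (hg : DifferentiableOn ℂ g U) : NH 1 g := by
  refine ⟨fun r => if r = 0 then g else fun _ => 0, ?_, ?_, ?_⟩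
  · intro r; rcases r with _ | s
    · simpa using hg
    · simp
  · intro r hr; rcases r with _ | s
    · omega
    · rfl
  · intro z hz; simp

lemma NH_mul {p q : ℕ} {f g : ℂ → ℂ} (hf : NH (p + 1) f) (hg : NH (q + 1) g) :
    NH (p + q + 1) (fun z => f z * g z) := by
  obtain ⟨c, hc, hcv, hceq⟩ := hf
  obtain ⟨b, hb, hbv, hbeq⟩ := hg
  refine ⟨fun m z => ∑ rs ∈ Finset.range (p + 1) ×ˢ Finset.range (q + 1),
      (if rs.1 + rs.2 = m then c rs.1 z * b rs.2 z else 0), ?_, ?_, ?_⟩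
  · intro m
    refine DifferentiableOn.fun_sum fun rs _ => ?_
    by_cases h : rs.1 + rs.2 = m
    · simp only [h, if_true]; exact (hc rs.1).mul (hb rs.2)
    · simp only [h, if_false]; exact differentiableOn_const 0
  · intro m hm
    funext z
    rw [show (0 : ℂ → ℂ) z = 0 from rfl]
    refine Finset.sum_eq_zero fun rs hrs => ?_
    rw [Finset.mem_product, Finset.mem_range, Finset.mem_range] at hrs
    have : rs.1 + rs.2 ≠ m := by omega
    simp [this]
  · intro z hz
    show f z * g z = _
    have hR : ∀ rs : ℕ × ℕ, rs ∈ Finset.range (p + 1) ×ˢ Finset.range (q + 1) →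
        (∑ m ∈ Finset.range (p + q + 1),
          if rs.1 + rs.2 = m then c rs.1 z * b rs.2 z * ((z.im : ℂ))⁻¹ ^ m else 0)
        = c rs.1 z * ((z.im : ℂ))⁻¹ ^ rs.1 * (b rs.2 z * ((z.im : ℂ))⁻¹ ^ rs.2) := by
      intro rs hrs
      rw [Finset.mem_product, Finset.mem_range, Finset.mem_range] at hrs
      rw [Finset.sum_ite_eq (Finset.range (p + q + 1)) (rs.1 + rs.2)
          (fun m => c rs.1 z * b rs.2 z * ((z.im : ℂ))⁻¹ ^ m),
        if_pos (Finset.mem_range.mpr (by omega)), pow_add]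
      ring
    calc f z * g z
        = ∑ rs ∈ Finset.range (p + 1) ×ˢ Finset.range (q + 1),
            c rs.1 z * ((z.im : ℂ))⁻¹ ^ rs.1 * (b rs.2 z * ((z.im : ℂ))⁻¹ ^ rs.2) := by
          rw [hceq z hz, hbeq z hz, Finset.sum_mul_sum, Finset.sum_product]
      _ = ∑ rs ∈ Finset.range (p + 1) ×ˢ Finset.range (q + 1),
            ∑ m ∈ Finset.range (p + q + 1),
              if rs.1 + rs.2 = m then c rs.1 z * b rs.2 z * ((z.im : ℂ))⁻¹ ^ m else 0 :=
          (Finset.sum_congr rfl hR).symm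
      _ = ∑ m ∈ Finset.range (p + q + 1),
            ∑ rs ∈ Finset.range (p + 1) ×ˢ Finset.range (q + 1),
              if rs.1 + rs.2 = m then c rs.1 z * b rs.2 z * ((z.im : ℂ))⁻¹ ^ m else 0 :=
          Finset.sum_comm
      _ = ∑ m ∈ Finset.range (p + q + 1),
            (∑ rs ∈ Finset.range (p + 1) ×ˢ Finset.range (q + 1),
              if rs.1 + rs.2 = m then c rs.1 z * b rs.2 z else 0) * ((z.im : ℂ))⁻¹ ^ m := by
          refine Finset.sum_congr rfl fun m _ => ?_
          rw [Finset.sum_mul]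
          refine Finset.sum_congr rfl fun rs _ => ?_
          rw [ite_mul, zero_mul]

lemma NH_raiseIter (l : ℤ) {g : ℂ → ℂ} (hg : DifferentiableOn ℂ g U) (t : ℕ) :
    NH (t + 1) (raiseIter l t g) := by
  induction t with
  | zero => exact NH_of_holomorphic hg
  | succ n ih => exact NH_raise ih _

end NHAux

/-- let `l₁, l₂ ≥ 4` and `k` be positive even integers with
`k < l₁ + l₂`; let `g₁, g₂` be holomorphic modular forms of level `SL₂(ℤ)` and
weights `l₁, l₂`; let `t₁, t₂ ∈ ℕ`, and let `d` be the nonnegative integer with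
`2d = (l₁ + 2t₁ + l₂ + 2t₂) − k` (so `d > t₁ + t₂`).  Then every cusp form `f`
of weight `k` for `SL₂(ℤ)` is orthogonal under the Petersson pairing to the
weight-`k` holomorphic part `L^d (R_{l₁}^(t₁) g₁ · R_{l₂}^(t₂) g₂)`:
`∫_𝒟 f(τ) · conj(L^d(R_{l₁}^(t₁) g₁ · R_{l₂}^(t₂) g₂)(τ)) · (Im τ)^(k−2) dx dy = 0`. -/


theorem cusp_form_orthogonal_to_product_of_raisings
    (l₁ l₂ k : ℤ) (hl₁ : 4 ≤ l₁) (hl₂ : 4 ≤ l₂) (hk : 0 < k)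
    (hl₁e : Even l₁) (hl₂e : Even l₂) (hke : Even k) (hklt : k < l₁ + l₂)
    (t₁ t₂ d : ℕ) (hd : 2 * (d : ℤ) = l₁ + 2 * t₁ + l₂ + 2 * t₂ - k)
    -- `g₁` is a modular form of weight `l₁` for `SL₂(ℤ)`:
    (g₁ : ℂ → ℂ) (hg₁hol : DifferentiableOn ℂ g₁ {z : ℂ | 0 < z.im})
    (hg₁inv : ∀ γ : Matrix (Fin 2) (Fin 2) ℤ, γ.det = 1 →
      ∀ z : ℂ, 0 < z.im → slash l₁ (γ.map (Int.cast : ℤ → ℝ)) g₁ z = g₁ z)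
    (hg₁bd : ∃ C A : ℝ, ∀ z : ℂ, A ≤ z.im → ‖g₁ z‖ ≤ C)
    -- `g₂` is a modular form of weight `l₂` for `SL₂(ℤ)`:
    (g₂ : ℂ → ℂ) (hg₂hol : DifferentiableOn ℂ g₂ {z : ℂ | 0 < z.im})
    (hg₂inv : ∀ γ : Matrix (Fin 2) (Fin 2) ℤ, γ.det = 1 →
      ∀ z : ℂ, 0 < z.im → slash l₂ (γ.map (Int.cast : ℤ → ℝ)) g₂ z = g₂ z)
    (hg₂bd : ∃ C A : ℝ, ∀ z : ℂ, A ≤ z.im → ‖g₂ z‖ ≤ C)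
    -- `f` is a cusp form of weight `k` for `SL₂(ℤ)`:
    (f : ℂ → ℂ) (hfhol : DifferentiableOn ℂ f {z : ℂ | 0 < z.im})
    (hfinv : ∀ γ : Matrix (Fin 2) (Fin 2) ℤ, γ.det = 1 →
      ∀ z : ℂ, 0 < z.im → slash k (γ.map (Int.cast : ℤ → ℝ)) f z = f z)
    (hfcusp : ∀ ε : ℝ, 0 < ε → ∃ A : ℝ, ∀ z : ℂ, A ≤ z.im → ‖f z‖ ≤ ε) :
    ∫ τ in fundamentalDomain,
        f τ *
          (starRingEnd ℂ)
            ((lower^[d] (fun w => raiseIter l₁ t₁ g₁ w * raiseIter l₂ t₂ g₂ w)) τ) *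
          (τ.im : ℂ) ^ (k - 2) = 0 := by
  have hdlt : t₁ + t₂ < d := by omega
  have h1 := NHAux.NH_raiseIter l₁ hg₁hol t₁
  have h2 := NHAux.NH_raiseIter l₂ hg₂hol t₂
  have hprod := NHAux.NH_mul h1 h2
  have hlow := NHAux.NH_lower_iter hprod d
  rw [show t₁ + t₂ + 1 - d = 0 by omega] at hlow
  have hzero := NHAux.NH_zero_eq hlow
  have hmeas : MeasurableSet fundamentalDomain := by
    refine MeasurableSet.inter ?_ (MeasurableSet.inter ?_ ?_)
    · exact (isOpen_lt continuous_const Complex.continuous_im).measurableSet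
    · exact (isClosed_le continuous_const continuous_norm).measurableSet
    · exact (isClosed_le (continuous_abs.comp Complex.continuous_re)
        continuous_const).measurableSet
  rw [MeasureTheory.setIntegral_congr_fun hmeas (g := fun _ => (0 : ℂ)) ?_,
    MeasureTheory.integral_zero]
  intro τ hτ
  simp only [hzero τ hτ.1, map_zero, mul_zero, zero_mul]
end

section
/- Let g1, g2 : ℍ → ℂ be holomorphic functions, let k1, k2 ∈ ℤ, let t1, t2 be nonnegative integers, and let d be a nonnegative integer with d > t1 + t2. Then the d-fold iterate of the lowering operator annihilates the product of iterated raisings: L^d ( R_{k1}^{(t1)} g1 · R_{k2}^{(t2)} g2 ) = 0. (In other words, the almost holomorphic function R_{k1}^{(t1)} g1 · R_{k2}^{(t2)} g2 has depth at most t1 + t2.) -/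
namespace AHAux

open Complex Finset

def UH : Set ℂ := {z : ℂ | 0 < z.im}

lemma isOpen_UH : IsOpen UH := isOpen_lt continuous_const Complex.continuous_im

/-- The key derivative computation for sums of terms `c i z * (Im z)⁻¹ ^ e i`. -/
lemma key {ι : Type} (s : Finset ι) (c : ι → ℂ → ℂ) (e : ι → ℕ)
    (hc : ∀ i, DifferentiableOn ℂ (c i) UH) (z : ℂ) (hz : 0 < z.im) :
    ∃ D : ℂ →L[ℝ] ℂ,
      HasFDerivAt (fun w => ∑ i ∈ s, c i w * ((w.im : ℂ)⁻¹) ^ e i) D z ∧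
      D 1 = ∑ i ∈ s, deriv (c i) z * ((z.im : ℂ)⁻¹) ^ e i ∧
      D Complex.I = ∑ i ∈ s,
        (Complex.I * deriv (c i) z * ((z.im : ℂ)⁻¹) ^ e i
          + c i z * ((e i : ℂ) * ((z.im : ℂ)⁻¹) ^ (e i - 1) * (-(((z.im : ℂ)) ^ 2)⁻¹))) := by
  have hy : ((z.im : ℝ) : ℂ) ≠ 0 := by
    simpa using ne_of_gt hz
  -- derivative of w ↦ (w.im : ℂ)
  have hYm : HasFDerivAt (fun w : ℂ => ((w.im : ℝ) : ℂ))
      (Complex.ofRealCLM.comp Complex.imCLM) z :=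
    (Complex.ofRealCLM.comp Complex.imCLM).hasFDerivAt
  -- per-term derivative
  set Du : ι → (ℂ →L[ℝ] ℂ) := fun i =>
    (ContinuousLinearMap.restrictScalars ℝ
      ((1 : ℂ →L[ℂ] ℂ).smulRight
        ((e i : ℂ) * ((z.im : ℂ)⁻¹) ^ (e i - 1) * (-(((z.im : ℂ)) ^ 2)⁻¹)))).comp
      (Complex.ofRealCLM.comp Complex.imCLM) with hDu
  set Dc : ι → (ℂ →L[ℝ] ℂ) := fun i =>
    ContinuousLinearMap.restrictScalars ℝ ((1 : ℂ →L[ℂ] ℂ).smulRight (deriv (c i) z)) with hDc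
  have hterm : ∀ i, HasFDerivAt (fun w => c i w * ((w.im : ℂ)⁻¹) ^ e i)
      (c i z • Du i + (((z.im : ℂ)⁻¹) ^ e i) • Dc i) z := by
    intro i
    have hu0 : HasDerivAt (fun y : ℂ => (y⁻¹) ^ e i)
        ((e i : ℂ) * ((z.im : ℂ)⁻¹) ^ (e i - 1) * (-(((z.im : ℂ)) ^ 2)⁻¹))
        ((z.im : ℝ) : ℂ) := (hasDerivAt_inv hy).pow (e i)
    have hu : HasFDerivAt (fun w : ℂ => ((w.im : ℂ)⁻¹) ^ e i) (Du i) z := by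
      have := ((hu0.hasFDerivAt).restrictScalars ℝ).comp z hYm
      exact this
    have hci : HasFDerivAt (c i) (Dc i) z := by
      have h1 : DifferentiableAt ℂ (c i) z :=
        (hc i).differentiableAt (isOpen_UH.mem_nhds hz)
      exact (h1.hasDerivAt.hasFDerivAt).restrictScalars ℝ
    exact hci.mul hu
  refine ⟨∑ i ∈ s, (c i z • Du i + (((z.im : ℂ)⁻¹) ^ e i) • Dc i),
    HasFDerivAt.fun_sum (fun i _ => hterm i), ?_, ?_⟩
  · rw [ContinuousLinearMap.sum_apply]
    refine Finset.sum_congr rfl fun i _ => ?_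
    simp [hDu, hDc, ContinuousLinearMap.smulRight_apply, smul_eq_mul]
    ring
  · rw [ContinuousLinearMap.sum_apply]
    refine Finset.sum_congr rfl fun i _ => ?_
    simp [hDu, hDc, ContinuousLinearMap.smulRight_apply, smul_eq_mul]
    ring

def Rep {ι : Type} (s : Finset ι) (c : ι → ℂ → ℂ) (e : ι → ℕ) (f : ℂ → ℂ) : Prop :=
  ∀ z ∈ UH, f z = ∑ i ∈ s, c i z * ((z.im : ℂ)⁻¹) ^ e i

lemma fderiv_of_rep {ι : Type} {s : Finset ι} {c : ι → ℂ → ℂ} {e : ι → ℕ} {f : ℂ → ℂ}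
    (hc : ∀ i, DifferentiableOn ℂ (c i) UH) (hrep : Rep s c e f) {z : ℂ} (hz : 0 < z.im) :
    (fderiv ℝ f z) 1 = ∑ i ∈ s, deriv (c i) z * ((z.im : ℂ)⁻¹) ^ e i ∧
    (fderiv ℝ f z) Complex.I = ∑ i ∈ s,
        (Complex.I * deriv (c i) z * ((z.im : ℂ)⁻¹) ^ e i
          + c i z * ((e i : ℂ) * ((z.im : ℂ)⁻¹) ^ (e i - 1) * (-(((z.im : ℂ)) ^ 2)⁻¹))) := by
  obtain ⟨D, hD, h1, hI⟩ := key s c e hc z hz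
  have heq : f =ᶠ[nhds z] (fun w => ∑ i ∈ s, c i w * ((w.im : ℂ)⁻¹) ^ e i) :=
    Filter.eventuallyEq_of_mem (isOpen_UH.mem_nhds hz) fun w hw => hrep w hw
  have : fderiv ℝ f z = D := by rw [heq.fderiv_eq, hD.fderiv]
  rw [this]; exact ⟨h1, hI⟩

lemma lower_formula {ι : Type} {s : Finset ι} {c : ι → ℂ → ℂ} {e : ι → ℕ} {f : ℂ → ℂ}
    (hc : ∀ i, DifferentiableOn ℂ (c i) UH) (hrep : Rep s c e f) {z : ℂ} (hz : 0 < z.im) :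
    lower f z = ∑ i ∈ s, (-(e i : ℂ)) * c i z * ((z.im : ℂ)⁻¹) ^ (e i - 1) := by
  obtain ⟨h1, hI⟩ := fderiv_of_rep hc hrep hz
  have hy : ((z.im : ℝ) : ℂ) ≠ 0 := by simpa using ne_of_gt hz
  have hyy : ((z.im : ℂ)) ^ 2 * (((z.im : ℂ)) ^ 2)⁻¹ = 1 := mul_inv_cancel₀ (pow_ne_zero _ hy)
  unfold lower dtaubar
  rw [h1, hI, Finset.mul_sum, ← Finset.sum_add_distrib, Finset.mul_sum, Finset.mul_sum]
  refine Finset.sum_congr rfl fun i _ => ?_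
  have hII : Complex.I * Complex.I = -1 := Complex.I_mul_I
  set y : ℂ := (z.im : ℂ)
  linear_combination (y^2 * (c i z * (e i : ℂ) * (y⁻¹) ^ (e i - 1) * (y^2)⁻¹)
      - Complex.I * y^2 * (deriv (c i) z * (y⁻¹) ^ e i)) * hII
    - ((e i : ℂ) * c i z * (y⁻¹) ^ (e i - 1)) * hyy

lemma raise_formula {ι : Type} {s : Finset ι} {c : ι → ℂ → ℂ} {e : ι → ℕ} {f : ℂ → ℂ}
    (k : ℤ)
    (hc : ∀ i, DifferentiableOn ℂ (c i) UH) (hrep : Rep s c e f) {z : ℂ} (hz : 0 < z.im) :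
    raise k f z = ∑ i ∈ s,
      ((2 * Complex.I * deriv (c i) z) * ((z.im : ℂ)⁻¹) ^ e i
        + (((k : ℂ) - (e i : ℂ)) * c i z) * ((z.im : ℂ)⁻¹) ^ (e i + 1)) := by
  obtain ⟨h1, hI⟩ := fderiv_of_rep hc hrep hz
  have hy : ((z.im : ℝ) : ℂ) ≠ 0 := by simpa using ne_of_gt hz
  unfold raise dtau
  rw [h1, hI, hrep z hz, div_eq_mul_inv, div_eq_mul_inv, Finset.mul_sum, ← Finset.sum_sub_distrib,
    Finset.mul_sum, Finset.mul_sum, Finset.mul_sum, Finset.sum_mul, ← Finset.sum_add_distrib]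
  refine Finset.sum_congr rfl fun i _ => ?_
  have hII : Complex.I * Complex.I = -1 := Complex.I_mul_I
  set y : ℂ := (z.im : ℂ)
  -- case split on e i = 0 to relate (y⁻¹)^(e i - 1) * (y^2)⁻¹ with (y⁻¹)^(e i + 1)
  rcases Nat.eq_zero_or_pos (e i) with h0 | hpos
  · rw [h0]
    push_cast
    linear_combination (-Complex.I * deriv (c i) z) * hII
  · obtain ⟨m, hm⟩ : ∃ m, e i = m + 1 := ⟨e i - 1, (Nat.succ_pred_eq_of_pos hpos).symm⟩
    rw [hm]
    have hsub : m + 1 - 1 = m := rfl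
    rw [hsub]
    have hpow : (y⁻¹) ^ (m + 1 + 1) = (y⁻¹) ^ m * (y ^ 2)⁻¹ := by
      rw [pow_add, pow_two, mul_inv]; ring
    have hpow2 : (y⁻¹) ^ (m + 1) = (y⁻¹) ^ m * y⁻¹ := by rw [pow_succ]
    rw [hpow, hpow2]
    push_cast
    linear_combination (c i z * ((m : ℂ) + 1) * ((y⁻¹) ^ m * (y ^ 2)⁻¹)
      - Complex.I * deriv (c i) z * ((y⁻¹) ^ m * y⁻¹)) * hII

/-- Almost-holomorphic of depth ≤ t on the upper half plane. -/
def AH (t : ℕ) (f : ℂ → ℂ) : Prop :=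
  ∃ (ι : Type) (s : Finset ι) (c : ι → ℂ → ℂ) (e : ι → ℕ),
    (∀ i, DifferentiableOn ℂ (c i) UH) ∧ (∀ i, e i ≤ t) ∧ Rep s c e f

lemma AH_of_holo {g : ℂ → ℂ} (hg : DifferentiableOn ℂ g UH) : AH 0 g := by
  refine ⟨Unit, Finset.univ, fun _ => g, fun _ => 0, fun _ => hg, fun _ => le_refl 0, ?_⟩
  intro z _; simp

lemma AH_mul {t₁ t₂ : ℕ} {f g : ℂ → ℂ} (hf : AH t₁ f) (hg : AH t₂ g) :
    AH (t₁ + t₂) (fun z => f z * g z) := by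
  obtain ⟨ι₁, s₁, c₁, e₁, hc₁, he₁, hrep₁⟩ := hf
  obtain ⟨ι₂, s₂, c₂, e₂, hc₂, he₂, hrep₂⟩ := hg
  refine ⟨ι₁ × ι₂, s₁ ×ˢ s₂, fun p z => c₁ p.1 z * c₂ p.2 z, fun p => e₁ p.1 + e₂ p.2,
    fun p => (hc₁ p.1).mul (hc₂ p.2), fun p => add_le_add (he₁ p.1) (he₂ p.2), ?_⟩
  intro z hz
  dsimp only
  rw [hrep₁ z hz, hrep₂ z hz, Finset.sum_mul_sum, Finset.sum_product]
  refine Finset.sum_congr rfl fun i _ => Finset.sum_congr rfl fun j _ => ?_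
  rw [pow_add]; ring

lemma AH_raise {t : ℕ} {f : ℂ → ℂ} (k : ℤ) (hf : AH t f) : AH (t + 1) (raise k f) := by
  obtain ⟨ι, s, c, e, hc, he, hrep⟩ := hf
  refine ⟨ι ⊕ ι, s.disjSum s,
    Sum.elim (fun i z => 2 * Complex.I * deriv (c i) z)
      (fun i z => ((k : ℂ) - (e i : ℂ)) * c i z),
    Sum.elim e (fun i => e i + 1), ?_, ?_, ?_⟩
  · rintro (i | i)
    · exact (((hc i).analyticOnNhd isOpen_UH).deriv.differentiableOn).const_mul _
    · exact (hc i).const_mul _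
  · rintro (i | i)
    · exact le_trans (he i) (Nat.le_succ t)
    · exact Nat.succ_le_succ (he i)
  · intro z hz
    rw [raise_formula k hc hrep hz, Finset.sum_disjSum, ← Finset.sum_add_distrib]
    simp

lemma AH_lower {t : ℕ} {f : ℂ → ℂ} (hf : AH (t + 1) f) : AH t (lower f) := by
  obtain ⟨ι, s, c, e, hc, he, hrep⟩ := hf
  refine ⟨ι, s, fun i z => (-(e i : ℂ)) * c i z, fun i => e i - 1,
    fun i => (hc i).const_mul _, fun i => by have := he i; show e i - 1 ≤ t; omega, ?_⟩
  intro z hz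
  rw [lower_formula hc hrep hz]

lemma lower_zero_on {f : ℂ → ℂ} (hf : ∀ z ∈ UH, f z = 0) : ∀ z ∈ UH, lower f z = 0 := by
  intro z hz
  have heq : f =ᶠ[nhds z] (fun _ => (0 : ℂ)) :=
    Filter.eventuallyEq_of_mem (isOpen_UH.mem_nhds hz) hf
  have h0 : fderiv ℝ f z = 0 := by
    rw [heq.fderiv_eq]; exact fderiv_const_apply 0
  unfold lower dtaubar
  rw [h0]; simp

lemma lower_iter_zero_on (m : ℕ) : ∀ f : ℂ → ℂ, (∀ z ∈ UH, f z = 0) →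
    ∀ z ∈ UH, lower^[m] f z = 0 := by
  induction m with
  | zero => intro f hf z hz; simpa using hf z hz
  | succ m ih =>
      intro f hf z hz
      rw [Function.iterate_succ_apply]
      exact ih (lower f) (lower_zero_on hf) z hz

lemma AH_depth (t : ℕ) : ∀ f : ℂ → ℂ, AH t f → ∀ d : ℕ, t < d →
    ∀ z ∈ UH, lower^[d] f z = 0 := by
  induction t with
  | zero =>
      intro f hf d hd z hz
      obtain ⟨d', rfl⟩ : ∃ d', d = d' + 1 := ⟨d - 1, by omega⟩
      rw [Function.iterate_succ_apply]
      obtain ⟨ι, s, c, e, hc, he, hrep⟩ := hf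
      have h0 : ∀ w ∈ UH, lower f w = 0 := by
        intro w hw
        rw [lower_formula hc hrep hw]
        refine Finset.sum_eq_zero fun i _ => ?_
        have : e i = 0 := Nat.le_zero.mp (he i)
        rw [this]; simp
      exact lower_iter_zero_on d' (lower f) h0 z hz
  | succ t ih =>
      intro f hf d hd z hz
      obtain ⟨d', rfl⟩ : ∃ d', d = d' + 1 := ⟨d - 1, by omega⟩
      rw [Function.iterate_succ_apply]
      exact ih (lower f) (AH_lower hf) d' (by omega) z hz

lemma AH_raiseIter {g : ℂ → ℂ} (hg : DifferentiableOn ℂ g UH) (k : ℤ) (t : ℕ) :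
    AH t (raiseIter k t g) := by
  induction t with
  | zero => exact AH_of_holo hg
  | succ t ih => exact AH_raise _ ih

end AHAux

/-- for holomorphic `g₁, g₂ : ℍ → ℂ`, weights `k₁, k₂ ∈ ℤ`,
`t₁, t₂ ∈ ℕ` and `d > t₁ + t₂`, the `d`-fold iterate of the lowering operator
annihilates `R_{k₁}^(t₁) g₁ · R_{k₂}^(t₂) g₂`; i.e., this almost holomorphic
function has depth at most `t₁ + t₂`. -/
theorem lower_iter_annihilates_product (g₁ g₂ : ℂ → ℂ)
    (hg₁ : DifferentiableOn ℂ g₁ {z : ℂ | 0 < z.im})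
    (hg₂ : DifferentiableOn ℂ g₂ {z : ℂ | 0 < z.im})
    (k₁ k₂ : ℤ) (t₁ t₂ d : ℕ) (hd : t₁ + t₂ < d) :
    ∀ z : ℂ, 0 < z.im →
      (lower^[d] (fun w => raiseIter k₁ t₁ g₁ w * raiseIter k₂ t₂ g₂ w)) z = 0 := by
  intro z hz
  exact AHAux.AH_depth (t₁ + t₂) _
    (AHAux.AH_mul (AHAux.AH_raiseIter hg₁ k₁ t₁) (AHAux.AH_raiseIter hg₂ k₂ t₂)) d hd z hz
end

section
/- Let G be a group, Γ a subgroup of G, and Δ a subset of G such that for all m ∈ Δ and γ ∈ Γ there exists a unique element m⋆γ ∈ Δ with mγ ∈ Γ·(m⋆γ); define I_m(γ) := (mγ)(m⋆γ)^{−1} ∈ Γ. Let ρ be a representation of Γ on a complex vector space V. Then the assignment (T_Δ ρ)(γ)(v ⊗ e_m) := ρ( I_m(γ^{−1})^{−1} ) v ⊗ e_{m⋆γ^{−1}}, extended linearly on V ⊗ ℂ[Δ], defines a representation of Γ on V ⊗ ℂ[Δ]; that is, each (T_Δρ)(γ) is an invertible linear map and (T_Δρ)(γ₁γ₂) = (T_Δρ)(γ₁)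 ∘ (T_Δρ)(γ₂). -/
open TensorProduct

/-!
Abstract Hecke-transversal setting: `G` a group, `Γ ≤ G`, `Δ ⊆ G`, and for each
`m ∈ Δ`, `γ ∈ Γ` a unique `m⋆γ ∈ Δ` with `m·γ ∈ Γ·(m⋆γ)`; `I_m(γ) := (mγ)(m⋆γ)⁻¹ ∈ Γ`.
The data is encoded by functions `star : Δ → Γ → Δ` and `I : Δ → Γ → Γ` subject to
`hstar : ↑m * ↑γ = ↑(I m γ) * ↑(star m γ)` together with the uniqueness hypothesis
`huniq`.
-/

/-- The vector-valued Hecke operator on representations: `(T_Δ ρ)(γ)` is the linear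
endomorphism of `V ⊗ ℂ[Δ]` sending `v ⊗ e_m` to `ρ(I_m(γ⁻¹)⁻¹) v ⊗ e_{m⋆γ⁻¹}`. -/
noncomputable def heckeRep {G : Type} [Group G] {Γ : Subgroup G} {Δ : Set G}
    {V : Type} [AddCommGroup V] [Module ℂ V] (ρ : Representation ℂ Γ V)
    (star : Δ → Γ → Δ) (I : Δ → Γ → Γ) (γ : Γ) :
    (V ⊗[ℂ] (Δ →₀ ℂ)) →ₗ[ℂ] (V ⊗[ℂ] (Δ →₀ ℂ)) :=
  letI : DecidableEq ↥Δ := Classical.decEq _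
  ((TensorProduct.finsuppScalarRight ℂ ℂ V ↥Δ).symm.toLinearMap).comp
    ((Finsupp.lsum ℂ fun m : ↥Δ =>
        (Finsupp.lsingle (star m γ⁻¹)).comp (ρ ((I m γ⁻¹)⁻¹))).comp
      (TensorProduct.finsuppScalarRight ℂ ℂ V ↥Δ).toLinearMap)

lemma heckeRep_apply {G : Type} [Group G] {Γ : Subgroup G} {Δ : Set G}
    {V : Type} [AddCommGroup V] [Module ℂ V] (ρ : Representation ℂ Γ V)
    (star : Δ → Γ → Δ) (I : Δ → Γ → Γ) (γ : Γ) (v : V) (m : Δ) :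
    heckeRep ρ star I γ (v ⊗ₜ[ℂ] Finsupp.single m 1) =
      ρ ((I m γ⁻¹)⁻¹) v ⊗ₜ[ℂ] Finsupp.single (star m γ⁻¹) 1 := by
  simp [heckeRep, TensorProduct.finsuppScalarRight_apply_tmul,
    Finsupp.sum_single_index, TensorProduct.finsuppScalarRight_symm_apply_single]

/-- the assignment `(T_Δρ)(γ)(v ⊗ e_m) = ρ(I_m(γ⁻¹)⁻¹) v ⊗ e_{m⋆γ⁻¹}`,
extended linearly on `V ⊗ ℂ[Δ]`, defines a representation of `Γ`: each
`(T_Δρ)(γ)` is an invertible linear map and `(T_Δρ)(γ₁γ₂) = (T_Δρ)(γ₁) ∘ (T_Δρ)(γ₂)`. -/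
theorem heckeRep_is_representation {G : Type} [Group G] (Γ : Subgroup G) (Δ : Set G)
    (star : Δ → Γ → Δ) (I : Δ → Γ → Γ)
    (hstar : ∀ (m : Δ) (γ : Γ), (m : G) * (γ : G) = (I m γ : G) * (star m γ : G))
    (huniq : ∀ (m : Δ) (γ : Γ) (m' : Δ),
      (∃ g : Γ, (m : G) * (γ : G) = (g : G) * (m' : G)) → m' = star m γ)
    {V : Type} [AddCommGroup V] [Module ℂ V] (ρ : Representation ℂ Γ V) :
    (∀ (γ : Γ) (v : V) (m : Δ),
        heckeRep ρ star I γ (v ⊗ₜ[ℂ] Finsupp.single m 1) =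
          ρ ((I m γ⁻¹)⁻¹) v ⊗ₜ[ℂ] Finsupp.single (star m γ⁻¹) 1) ∧
    (∀ γ : Γ, Function.Bijective (heckeRep ρ star I γ)) ∧
    (∀ γ₁ γ₂ : Γ,
        heckeRep ρ star I (γ₁ * γ₂) =
          (heckeRep ρ star I γ₁).comp (heckeRep ρ star I γ₂)) := by
  have hs1 : ∀ m : Δ, star m 1 = m := fun m =>
    (huniq m 1 m ⟨1, by simp⟩).symm
  have hI1 : ∀ m : Δ, I m 1 = 1 := by
    intro m
    have h := hstar m 1
    rw [hs1] at h
    have : (I m 1 : G) = 1 := by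
      have := mul_right_cancel (a := (I m 1 : G)) (b := (m : G)) (c := (1 : G))
      simpa using (mul_right_cancel (b := (m : G)) (by simpa using h.symm) : (I m 1 : G) = 1)
    exact Subtype.ext this
  have hsmul : ∀ (m : Δ) (γ γ' : Γ), star m (γ * γ') = star (star m γ) γ' := by
    intro m γ γ'
    refine (huniq m (γ * γ') (star (star m γ) γ')
      ⟨I m γ * I (star m γ) γ', ?_⟩).symm
    push_cast
    rw [← mul_assoc, hstar m γ, mul_assoc, hstar (star m γ) γ', mul_assoc]
  have hImul : ∀ (m : Δ) (γ γ' : Γ), I m (γ * γ') = I m γ * I (star m γ) γ' := by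
    intro m γ γ'
    have h1 := hstar m (γ * γ')
    rw [hsmul m γ γ'] at h1
    have h2 : (m : G) * ((γ : G) * (γ' : G)) =
        ((I m γ : G) * (I (star m γ) γ' : G)) * (star (star m γ) γ' : G) := by
      rw [← mul_assoc, hstar m γ, mul_assoc, hstar (star m γ) γ', mul_assoc]
    refine Subtype.ext ?_
    push_cast at h1 ⊢
    exact mul_right_cancel (h1.symm.trans h2)
  have happly := fun γ v m => heckeRep_apply ρ star I γ v m
  have hcomp : ∀ γ₁ γ₂ : Γ,
      heckeRep ρ star I (γ₁ * γ₂) =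
        (heckeRep ρ star I γ₁).comp (heckeRep ρ star I γ₂) := by
    intro γ₁ γ₂
    apply TensorProduct.ext
    apply LinearMap.ext; intro v
    apply Finsupp.lhom_ext; intro m c
    have hc : Finsupp.single m c = c • Finsupp.single m (1 : ℂ) := by
      simp [Finsupp.smul_single]
    simp only [LinearMap.compr₂_apply, LinearMap.compr₂ₛₗ_apply, TensorProduct.mk_apply, LinearMap.comp_apply, hc,
      TensorProduct.tmul_smul, map_smul]
    rw [happly, happly, happly]
    rw [mul_inv_rev, hsmul m γ₂⁻¹ γ₁⁻¹, hImul m γ₂⁻¹ γ₁⁻¹, mul_inv_rev, map_mul]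
    rfl
  have hone : heckeRep ρ star I (1 : Γ) = LinearMap.id := by
    apply TensorProduct.ext
    apply LinearMap.ext; intro v
    apply Finsupp.lhom_ext; intro m c
    have hc : Finsupp.single m c = c • Finsupp.single m (1 : ℂ) := by
      simp [Finsupp.smul_single]
    simp only [LinearMap.compr₂_apply, LinearMap.compr₂ₛₗ_apply, TensorProduct.mk_apply, LinearMap.comp_apply, hc,
      TensorProduct.tmul_smul, map_smul, LinearMap.id_apply]
    rw [happly]
    simp [hs1, hI1]
  refine ⟨happly, ?_, hcomp⟩
  intro γ
  have h1 : (heckeRep ρ star I γ).comp (heckeRep ρ star I γ⁻¹) = LinearMap.id := by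
    rw [← hcomp, mul_inv_cancel, hone]
  have h2 : (heckeRep ρ star I γ⁻¹).comp (heckeRep ρ star I γ) = LinearMap.id := by
    rw [← hcomp, inv_mul_cancel, hone]
  exact Function.bijective_iff_has_inverse.mpr
    ⟨heckeRep ρ star I γ⁻¹, LinearMap.congr_fun h2, LinearMap.congr_fun h1⟩
end

section
/- Let G be a group, Γ a subgroup of G, and Δ a subset of G such that for all m ∈ Δ and γ ∈ Γ there exists a unique element m⋆γ ∈ Δ with mγ ∈ Γ·(m⋆γ); define I_m(γ) := (mγ)(m⋆γ)^{−1} ∈ Γ. Let ρ and ρ' be representations of Γ on complex vector spaces V and V'. Then the linear map π : (V ⊗ ℂ[Δ]) ⊗ (V' ⊗ ℂ[Δ]) → (V ⊗ V') ⊗ ℂ[Δ] determined by (v ⊗ e_m) ⊗ (w ⊗ e_{m'}) ↦ (v ⊗ w) ⊗ e_m if m = m' and ↦ 0 otherwise, is a surjective Γ-equivariant map from (T_Δρ) ⊗ (T_Δρ') onto T_Δ(ρ ⊗ ρ'). -/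
open TensorProduct

/-- The projection `π : (V ⊗ ℂ[Δ]) ⊗ (V′ ⊗ ℂ[Δ]) → (V ⊗ V′) ⊗ ℂ[Δ]` determined by
`(v ⊗ e_m) ⊗ (w ⊗ e_{m′}) ↦ (v ⊗ w) ⊗ e_m` if `m = m′` and `0` otherwise. -/
noncomputable def heckeProj {G : Type} [Group G] {Δ : Set G}
    {V V' : Type} [AddCommGroup V] [Module ℂ V] [AddCommGroup V'] [Module ℂ V'] :
    ((V ⊗[ℂ] (Δ →₀ ℂ)) ⊗[ℂ] (V' ⊗[ℂ] (Δ →₀ ℂ))) →ₗ[ℂ] ((V ⊗[ℂ] V') ⊗[ℂ] (Δ →₀ ℂ)) :=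
  letI : DecidableEq ↥Δ := Classical.decEq _
  ((TensorProduct.finsuppScalarRight ℂ ℂ (V ⊗[ℂ] V') ↥Δ).symm.toLinearMap).comp
    ((Finsupp.lsum ℂ fun p : ↥Δ × ↥Δ =>
        if p.1 = p.2 then (Finsupp.lsingle p.1 : (V ⊗[ℂ] V') →ₗ[ℂ] (↥Δ →₀ V ⊗[ℂ] V')) else 0).comp
      ((finsuppTensorFinsupp ℂ ℂ V V' ↥Δ ↥Δ).toLinearMap.comp
        (TensorProduct.map (TensorProduct.finsuppScalarRight ℂ ℂ V ↥Δ).toLinearMap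
          (TensorProduct.finsuppScalarRight ℂ ℂ V' ↥Δ).toLinearMap)))


lemma fsr_tmul_single {V : Type} [AddCommGroup V] [Module ℂ V] {ι : Type} [DecidableEq ι] (v : V) (i : ι) :
    (TensorProduct.finsuppScalarRight ℂ ℂ V ι) (v ⊗ₜ Finsupp.single i 1) = Finsupp.single i v := by
  rw [finsuppScalarRight_apply_tmul, Finsupp.sum_single_index] <;> simp

lemma heckeRep_tmul {G : Type} [Group G] {Γ : Subgroup G} {Δ : Set G}
    {V : Type} [AddCommGroup V] [Module ℂ V] (ρ : Representation ℂ Γ V)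
    (star : Δ → Γ → Δ) (I : Δ → Γ → Γ) (γ : Γ) (v : V) (m : Δ) :
    heckeRep ρ star I γ (v ⊗ₜ Finsupp.single m 1) =
      ρ ((I m γ⁻¹)⁻¹) v ⊗ₜ Finsupp.single (star m γ⁻¹) 1 := by
  letI : DecidableEq ↑Δ := Classical.decEq _
  simp only [heckeRep, LinearMap.comp_apply, LinearEquiv.coe_toLinearMap, fsr_tmul_single]
  rw [Finsupp.lsum_single]
  simp [TensorProduct.finsuppScalarRight_symm_apply_single]

lemma heckeProj_tmul {G : Type} [Group G] {Δ : Set G}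
    {V V' : Type} [AddCommGroup V] [Module ℂ V] [AddCommGroup V'] [Module ℂ V']
    (v : V) (w : V') (m m' : Δ) [Decidable (m = m')] :
    heckeProj ((v ⊗ₜ[ℂ] Finsupp.single m 1) ⊗ₜ[ℂ] (w ⊗ₜ[ℂ] Finsupp.single m' 1)) =
      if m = m' then (v ⊗ₜ[ℂ] w) ⊗ₜ[ℂ] Finsupp.single m (1 : ℂ) else 0 := by
  letI : DecidableEq ↑Δ := Classical.decEq _
  simp only [heckeProj, LinearMap.comp_apply, LinearEquiv.coe_toLinearMap,
    TensorProduct.map_tmul, fsr_tmul_single, finsuppTensorFinsupp_single]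
  rw [Finsupp.lsum_single]
  by_cases h : m = m'
  · simp [h, TensorProduct.finsuppScalarRight_symm_apply_single]
  · simp [h]

open Classical in
/-- the linear map `π` determined by
`(v ⊗ e_m) ⊗ (w ⊗ e_{m′}) ↦ (v ⊗ w) ⊗ e_m` if `m = m′` (and `0` otherwise) is a
surjective `Γ`-equivariant map from `(T_Δρ) ⊗ (T_Δρ′)` onto `T_Δ(ρ ⊗ ρ′)`. -/
theorem heckeProj_surjective_equivariant {G : Type} [Group G] (Γ : Subgroup G) (Δ : Set G)
    (star : Δ → Γ → Δ) (I : Δ → Γ → Γ)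
    (hstar : ∀ (m : Δ) (γ : Γ), (m : G) * (γ : G) = (I m γ : G) * (star m γ : G))
    (huniq : ∀ (m : Δ) (γ : Γ) (m' : Δ),
      (∃ g : Γ, (m : G) * (γ : G) = (g : G) * (m' : G)) → m' = star m γ)
    {V V' : Type} [AddCommGroup V] [Module ℂ V] [AddCommGroup V'] [Module ℂ V']
    (ρ : Representation ℂ Γ V) (ρ' : Representation ℂ Γ V') :
    (∀ (v : V) (w : V') (m m' : Δ),
        heckeProj ((v ⊗ₜ[ℂ] Finsupp.single m 1) ⊗ₜ[ℂ] (w ⊗ₜ[ℂ] Finsupp.single m' 1)) =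
          if m = m' then (v ⊗ₜ[ℂ] w) ⊗ₜ[ℂ] Finsupp.single m (1 : ℂ) else 0) ∧
    Function.Surjective
      (heckeProj (Δ := Δ) (V := V) (V' := V')) ∧
    (∀ γ : Γ,
        (heckeProj (Δ := Δ) (V := V) (V' := V')).comp
            (TensorProduct.map (heckeRep ρ star I γ) (heckeRep ρ' star I γ)) =
          (heckeRep (ρ.tprod ρ') star I γ).comp (heckeProj (Δ := Δ) (V := V) (V' := V'))) := by
  
  have star_inj : ∀ (γ : Γ) (m m' : Δ), star m γ = star m' γ → m = m' := by
    intro γ m m' h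
    have key : ∀ n : Δ, n = star (star n γ) γ⁻¹ := by
      intro n
      refine huniq (star n γ) γ⁻¹ n ⟨(I n γ)⁻¹, ?_⟩
      have h1 : (star n γ : G) = (I n γ : G)⁻¹ * ((n : G) * (γ : G)) := by
        rw [eq_inv_mul_iff_mul_eq]; exact (hstar n γ).symm
      push_cast
      rw [h1]
      group
    rw [key m, key m', h]
  refine ⟨?_, ?_, ?_⟩
  · intro v w m m'
    by_cases h : m = m' <;> simp [heckeProj_tmul, h]
  · rw [← LinearMap.range_eq_top, eq_top_iff]
    rintro x -
    induction x using TensorProduct.induction_on with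
    | zero => exact zero_mem _
    | add a b ha hb => exact add_mem ha hb
    | tmul t f =>
      induction t using TensorProduct.induction_on with
      | zero => rw [TensorProduct.zero_tmul]; exact zero_mem _
      | add a b ha hb => rw [TensorProduct.add_tmul]; exact add_mem ha hb
      | tmul v w =>
        induction f using Finsupp.induction_linear with
        | zero => rw [TensorProduct.tmul_zero]; exact zero_mem _
        | add f g hf hg => rw [TensorProduct.tmul_add]; exact add_mem hf hg
        | single m c =>
          refine ⟨c • ((v ⊗ₜ Finsupp.single m 1) ⊗ₜ (w ⊗ₜ Finsupp.single m 1)), ?_⟩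
          rw [map_smul, heckeProj_tmul]
          rw [if_pos rfl, ← TensorProduct.tmul_smul, Finsupp.smul_single, smul_eq_mul, mul_one]
  · intro γ
    ext v m w m'
    simp only [LinearMap.comp_apply, LinearMap.compr₂_apply, TensorProduct.mk_apply,
      TensorProduct.map_tmul, heckeRep_tmul, heckeProj_tmul, TensorProduct.AlgebraTensorModule.curry_apply,
      TensorProduct.curry_apply, LinearMap.coe_restrictScalars]
    by_cases h : m = m'
    · subst h
      simp [heckeProj_tmul, heckeRep_tmul, Representation.tprod_apply]
    · have h2 : star m γ⁻¹ ≠ star m' γ⁻¹ := fun hc => h (star_inj _ _ _ hc)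
      simp [heckeProj_tmul, heckeRep_tmul, h, h2]
end
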